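/- For every real $z > 1/2$, the Gamma function satisfies $\frac{\Gamma(z+1/2)}{\Gamma(z)} \leq \left(z + \frac{\sqrt{3}}{2}\right)^{1/2} \leq 2\sqrt{z}$. -/
import Mathlib

/-- Kershaw's inequality: for every real `z > 1/2`,
`Γ(z + 1/2) / Γ(z) ≤ (z + √3/2)^{1/2} ≤ 2√z`. -/
theorem stmt7 (z : ℝ) (hz : 1 / 2 < z) :
    Real.Gamma (z + 1 / 2) / Real.Gamma z ≤ (z + Real.sqrt 3 / 2) ^ ((1 : ℝ) / 2) ∧
      (z + Real.sqrt 3 / 2) ^ ((1 : ℝ) / 2) ≤ 2 * Real.sqrt z := by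
  have hz0 : (0 : ℝ) < z := by linarith
  have hG : 0 < Real.Gamma z := Real.Gamma_pos_of_pos hz0
  have hs3 : Real.sqrt 3 ≤ 2 := by
    nlinarith [Real.sq_sqrt (by norm_num : (3:ℝ) ≥ 0), Real.sqrt_nonneg 3]
  have hs3' : 0 ≤ Real.sqrt 3 := Real.sqrt_nonneg 3
  constructor
  · have key : Real.Gamma (z + 1 / 2) ≤
        Real.Gamma z ^ ((1:ℝ)/2) * Real.Gamma (z + 1) ^ ((1:ℝ)/2) := by
      have := Real.Gamma_mul_add_mul_le_rpow_Gamma_mul_rpow_Gamma hz0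
        (by linarith : (0:ℝ) < z + 1) (by norm_num : (0:ℝ) < 1/2)
        (by norm_num : (0:ℝ) < 1/2) (by norm_num)
      convert this using 2
      ring
    have key2 : Real.Gamma (z + 1 / 2) ≤ Real.Gamma z * Real.sqrt z := by
      calc Real.Gamma (z + 1/2)
          ≤ Real.Gamma z ^ ((1:ℝ)/2) * Real.Gamma (z+1) ^ ((1:ℝ)/2) := key
        _ = Real.Gamma z ^ ((1:ℝ)/2) * (z * Real.Gamma z) ^ ((1:ℝ)/2) := by
            rw [Real.Gamma_add_one (ne_of_gt hz0)]
        _ = Real.Gamma z * Real.sqrt z := by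
            rw [Real.mul_rpow hz0.le hG.le, ← Real.sqrt_eq_rpow,
              ← Real.sqrt_eq_rpow]
            rw [show Real.sqrt (Real.Gamma z) * (Real.sqrt z * Real.sqrt (Real.Gamma z))
                = Real.sqrt (Real.Gamma z) * Real.sqrt (Real.Gamma z) * Real.sqrt z by ring,
              Real.mul_self_sqrt hG.le]
    have hsz : Real.sqrt z ≤ (z + Real.sqrt 3 / 2) ^ ((1:ℝ)/2) := by
      rw [← Real.sqrt_eq_rpow]
      exact Real.sqrt_le_sqrt (by linarith)
    calc Real.Gamma (z + 1/2) / Real.Gamma z ≤ Real.sqrt z := by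
          rw [div_le_iff₀ hG]; linarith [key2]
      _ ≤ _ := hsz
  · rw [← Real.sqrt_eq_rpow,
      show (2:ℝ) * Real.sqrt z = Real.sqrt (4*z) by
        rw [show (4:ℝ)*z = 2^2*z by ring, Real.sqrt_mul (by positivity),
          Real.sqrt_sq (by norm_num)]]
    exact Real.sqrt_le_sqrt (by linarith)
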